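/- Let E be a real inner product space and let l_1, ..., l_T : E → ℝ be differentiable with each l_t being μ-strongly convex for μ > 0 and L-smooth (gradient L-Lipschitz), and suppose each l_t attains its global minimum at a point w*_t. Suppose the iterates satisfy the follow-the-leader (FTL) updates: for each t, w_t is a global minimizer (with vanishing gradient) of F_t(w) := Σ_{i=1}^{t-1} l_i(w), and w_{T+1} is a global minimizer of F_{T+1}. If all iterates w_1, ..., w_T, all minimizers w*_1, ..., w*_T, and the comparator w* lie in a set W of diameter D, then (using ‖∇l_t(w_t)‖ = ‖∇l_t(w_t) − ∇l_t(w*_t)‖ ≤ L‖w_t − w*_t‖ ≤ LD) the regret satisfies R(T) = Σ_{t=1}^{T} [l_t(w_t) − l_t(w*)] ≤ (L²D²/(2μ))·(1 + log T). -/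

import Mathlib

open Finset
open scoped Gradient



local notation "⟪" x ", " y "⟫" => @inner ℝ _ _ x y

section FTLHelpers

variable {E : Type*} [NormedAddCommGroup E] [InnerProductSpace ℝ E] [CompleteSpace E]

lemma ftl_aux_gradAdd {f g : E → ℝ} {f' g' : E} {x : E}
    (hf : HasGradientAt f f' x) (hg : HasGradientAt g g' x) :
    HasGradientAt (fun y => f y + g y) (f' + g') x := by
  rw [hasGradientAt_iff_hasFDerivAt] at hf hg ⊢
  simpa [map_add] using hf.fun_add hg

lemma ftl_aux_gradSum {ι : Type*} (s : Finset ι) (f : ι → E → ℝ) (f' : ι → E) (x : E)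
    (h : ∀ i ∈ s, HasGradientAt (f i) (f' i) x) :
    HasGradientAt (fun y => ∑ i ∈ s, f i y) (∑ i ∈ s, f' i) x := by
  rw [hasGradientAt_iff_hasFDerivAt]
  simpa [map_sum] using HasFDerivAt.fun_sum (fun i hi => (h i hi).hasFDerivAt)

lemma ftl_aux_gradNormSq (c : ℝ) (x : E) :
    HasGradientAt (fun y : E => c / 2 * ‖y‖ ^ 2) (c • x) x := by
  rw [hasGradientAt_iff_hasFDerivAt]
  have h := (hasStrictFDerivAt_norm_sq x).hasFDerivAt.const_mul (c / 2)
  convert h using 1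
  · rfl
  ext y
  simp [InnerProductSpace.toDual_apply_apply, real_inner_smul_left]
  ring

lemma ftl_aux_convexGradLe {g : E → ℝ} (hg : ConvexOn ℝ Set.univ g) {x : E} {g' : E}
    (hd : HasGradientAt g g' x) (y : E) : g x + ⟪g', y - x⟫ ≤ g y := by
  have hline : HasDerivAt (fun s : ℝ => x + s • (y - x)) (y - x) 0 := by
    simpa using ((hasDerivAt_id (0 : ℝ)).smul_const (y - x)).const_add x
  have h0 : x + (0 : ℝ) • (y - x) = x := by simp
  have hdF : HasFDerivAt g (InnerProductSpace.toDual ℝ E g') (x + (0 : ℝ) • (y - x)) := by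
    rw [h0]; exact hd.hasFDerivAt
  have hφ : HasDerivAt (fun s : ℝ => g (x + s • (y - x))) ⟪g', y - x⟫ 0 := by
    simpa [InnerProductSpace.toDual_apply_apply, Function.comp_def] using hdF.comp_hasDerivAt 0 hline
  have hconv : ConvexOn ℝ Set.univ (fun s : ℝ => g (x + s • (y - x))) := by
    have h2 : (fun s : ℝ => g (x + s • (y - x))) = g ∘ (AffineMap.lineMap x y) := by
      funext s
      simp [AffineMap.lineMap_apply, add_comm]
    rw [h2]
    simpa using hg.comp_affineMap (AffineMap.lineMap x y)
  have hs := hconv.le_slope_of_hasDerivAt (Set.mem_univ (0:ℝ)) (Set.mem_univ (1:ℝ)) one_pos hφ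
  have : slope (fun s : ℝ => g (x + s • (y - x))) 0 1 = g y - g x := by
    simp [slope_def_field]
  rw [this] at hs
  linarith

lemma ftl_aux_strongGradLe {h : E → ℝ} {c : ℝ} (hd : Differentiable ℝ h)
    (hc : ConvexOn ℝ Set.univ (fun z => h z - c / 2 * ‖z‖ ^ 2)) (x y : E) :
    h x + ⟪∇ h x, y - x⟫ + c / 2 * ‖y - x‖ ^ 2 ≤ h y := by
  have hx : HasGradientAt h (∇ h x) x := (hd x).hasGradientAt
  have hns := ftl_aux_gradNormSq c x
  have hnsneg : HasGradientAt (fun y : E => -(c / 2 * ‖y‖ ^ 2)) (-(c • x)) x := by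
    rw [hasGradientAt_iff_hasFDerivAt]
    simpa [map_neg] using hns.hasFDerivAt.fun_neg
  have hgx : HasGradientAt (fun z => h z - c / 2 * ‖z‖ ^ 2) (∇ h x - c • x) x := by
    have := ftl_aux_gradAdd hx hnsneg
    simpa [sub_eq_add_neg] using this
  have key := ftl_aux_convexGradLe hc hgx y
  have e1 : ⟪∇ h x - c • x, y - x⟫ = ⟪∇ h x, y - x⟫ - c * ⟪x, y - x⟫ := by
    rw [inner_sub_left, real_inner_smul_left]
  have e2 : ‖y - x‖ ^ 2 = ‖y‖ ^ 2 - 2 * ⟪x, y⟫ + ‖x‖ ^ 2 := by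
    rw [norm_sub_sq_real, real_inner_comm y x]
  have e3 : ⟪x, y - x⟫ = ⟪x, y⟫ - ‖x‖ ^ 2 := by
    rw [inner_sub_right, real_inner_self_eq_norm_sq]
  rw [e1, e3] at key
  rw [e2]
  linarith [key]

lemma ftl_aux_gradZero {f : E → ℝ} {x : E} (hm : ∀ y, f x ≤ f y) : ∇ f x = 0 := by
  have hl : IsLocalMin f x := Filter.Eventually.of_forall hm
  have h2 : fderiv ℝ f x = 0 := hl.fderiv_eq_zero
  simp [gradient, h2]

lemma ftl_aux_convexOnSum {ι : Type*} (s : Finset ι) (f : ι → E → ℝ)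
    (h : ∀ i ∈ s, ConvexOn ℝ Set.univ (f i)) :
    ConvexOn ℝ Set.univ fun x => ∑ i ∈ s, f i x := by
  classical
  induction s using Finset.induction_on with
  | empty => simpa using convexOn_const (0 : ℝ) convex_univ
  | insert a s' hni ih =>
    simp only [Finset.sum_insert hni]
    exact (h a (Finset.mem_insert_self a s')).add
      (ih fun i hi => h i (Finset.mem_insert_of_mem hi))

end FTLHelpers

/-- FTL achieves logarithmic regret for smooth, strongly-convex losses
(Theorem: FTL - Smooth + strongly convex). -/
theorem ftl_regret_smooth_strongly_convex {E : Type*} [NormedAddCommGroup E]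
    [InnerProductSpace ℝ E] [CompleteSpace E] (T : ℕ) (μ L : ℝ) (hμ : 0 < μ)
    (l : ℕ → E → ℝ) (w wopt : ℕ → E) (wstar : E) (W : Set E) (D : ℝ)
    (hl : ∀ i ∈ Finset.Icc 1 T, Differentiable ℝ (l i))
    (hsc : ∀ i ∈ Finset.Icc 1 T, ConvexOn ℝ Set.univ (fun x => l i x - μ / 2 * ‖x‖ ^ 2))
    (hsmooth : ∀ i ∈ Finset.Icc 1 T, ∀ x y : E, ‖∇ (l i) x - ∇ (l i) y‖ ≤ L * ‖x - y‖)
    (hopt : ∀ i ∈ Finset.Icc 1 T, ∀ x, l i (wopt i) ≤ l i x)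
    (F : ℕ → E → ℝ)
    (hF : ∀ t x, F t x = ∑ i ∈ Finset.Icc 1 (t - 1), l i x)
    (hmin : ∀ t ∈ Finset.Icc 1 T, (∀ x, F t (w t) ≤ F t x) ∧ ∇ (F t) (w t) = 0)
    (hminT : ∀ x, F (T + 1) (w (T + 1)) ≤ F (T + 1) x)
    (hW : ∀ t ∈ Finset.Icc 1 T, w t ∈ W) (hWopt : ∀ t ∈ Finset.Icc 1 T, wopt t ∈ W)
    (hWs : wstar ∈ W)
    (hD : ∀ u ∈ W, ∀ v ∈ W, ‖u - v‖ ≤ D) :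
    ∑ t ∈ Finset.Icc 1 T, (l t (w t) - l t wstar)
      ≤ L ^ 2 * D ^ 2 / (2 * μ) * (1 + Real.log T) := by
  classical
  set K := L ^ 2 * D ^ 2 / (2 * μ) with hKdef
  have hK0 : 0 ≤ K := by positivity
  -- differentiability of the partial sums
  have hFdiff : ∀ t, t - 1 ≤ T → Differentiable ℝ (F t) := by
    intro t ht x
    have : HasGradientAt (fun y => ∑ i ∈ Finset.Icc 1 (t - 1), l i y)
        (∑ i ∈ Finset.Icc 1 (t - 1), ∇ (l i) x) x := by
      refine ftl_aux_gradSum _ _ _ _ fun i hi => ?_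
      rw [Finset.mem_Icc] at hi
      exact ((hl i (Finset.mem_Icc.2 ⟨hi.1, hi.2.trans ht⟩)) x).hasGradientAt
    have hfun : F t = fun y => ∑ i ∈ Finset.Icc 1 (t - 1), l i y := funext (hF t)
    rw [hfun]
    exact this.differentiableAt
  have hFsucc : ∀ t, 1 ≤ t → ∀ x, F (t + 1) x = F t x + l t x := by
    intro t ht x
    obtain ⟨s, rfl⟩ : ∃ s, t = s + 1 := ⟨t - 1, (Nat.succ_pred_eq_of_pos ht).symm⟩
    rw [hF, hF]
    simp only [Nat.add_sub_cancel]
    exact Finset.sum_Icc_succ_top (Nat.le_add_left 1 s) _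
  -- key one-step bound
  have hstep : ∀ t ∈ Finset.Icc 1 T,
      F (t + 1) (w t) - F (t + 1) (w (t + 1)) ≤ K * (1 / (t : ℝ)) := by
    intro t ht
    rw [Finset.mem_Icc] at ht
    obtain ⟨ht1, htT⟩ := ht
    have htpos : (0 : ℝ) < (t : ℝ) := by exact_mod_cast ht1
    obtain ⟨hmin1, hgrad0⟩ := hmin t (Finset.mem_Icc.2 ⟨ht1, htT⟩)
    -- gradient of F (t+1) at w t equals gradient of l t at w t
    set G := ∇ (l t) (w t) with hGdef
    have hGF : HasGradientAt (F (t + 1)) G (w t) := by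
      have h1 : HasGradientAt (F t) 0 (w t) := by
        have := (hFdiff t (le_trans (Nat.sub_le t 1) htT) (w t)).hasGradientAt
        rwa [hgrad0] at this
      have h2 : HasGradientAt (l t) G (w t) :=
        ((hl t (Finset.mem_Icc.2 ⟨ht1, htT⟩)) (w t)).hasGradientAt
      have h3 := ftl_aux_gradAdd h1 h2
      rw [zero_add] at h3
      have hfun : (fun y => F t y + l t y) = F (t + 1) :=
        funext fun y => (hFsucc t ht1 y).symm
      rwa [hfun] at h3
    have hGeq : ∇ (F (t + 1)) (w t) = G := hGF.gradient
    -- strong convexity of F (t+1) with modulus t * μ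
    have hFsc : ConvexOn ℝ Set.univ
        (fun x => F (t + 1) x - ((t : ℝ) * μ) / 2 * ‖x‖ ^ 2) := by
      have heq : (fun x => F (t + 1) x - ((t : ℝ) * μ) / 2 * ‖x‖ ^ 2)
          = fun x => ∑ i ∈ Finset.Icc 1 t, (l i x - μ / 2 * ‖x‖ ^ 2) := by
        funext x
        rw [hF]
        simp only [Nat.add_sub_cancel, Finset.sum_sub_distrib, Finset.sum_const,
          Nat.card_Icc, Nat.add_sub_cancel, nsmul_eq_mul]
        ring
      rw [heq]
      exact ftl_aux_convexOnSum _ _ fun i hi => by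
        rw [Finset.mem_Icc] at hi
        exact hsc i (Finset.mem_Icc.2 ⟨hi.1, hi.2.trans htT⟩)
    -- bound on the gradient norm
    have hgopt : ∇ (l t) (wopt t) = 0 :=
      ftl_aux_gradZero (hopt t (Finset.mem_Icc.2 ⟨ht1, htT⟩))
    have hGnorm : ‖G‖ ≤ L * ‖w t - wopt t‖ := by
      have := hsmooth t (Finset.mem_Icc.2 ⟨ht1, htT⟩) (w t) (wopt t)
      rwa [hgopt, sub_zero] at this
    have hdist : ‖w t - wopt t‖ ≤ D :=
      hD _ (hW t (Finset.mem_Icc.2 ⟨ht1, htT⟩)) _ (hWopt t (Finset.mem_Icc.2 ⟨ht1, htT⟩))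
    have hGsq : ‖G‖ ^ 2 ≤ L ^ 2 * D ^ 2 := by
      have h1 : ‖G‖ ^ 2 ≤ (L * ‖w t - wopt t‖) ^ 2 :=
        pow_le_pow_left₀ (norm_nonneg G) hGnorm 2
      have h2 : ‖w t - wopt t‖ ^ 2 ≤ D ^ 2 :=
        pow_le_pow_left₀ (norm_nonneg _) hdist 2
      nlinarith [sq_nonneg L]
    -- minimality of F (t+1) at w (t+1)
    have hmin' : ∀ x, F (t + 1) (w (t + 1)) ≤ F (t + 1) x := by
      rcases eq_or_lt_of_le htT with hEq | hlt
      · subst hEq; exact hminT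
      · exact (hmin (t + 1) (Finset.mem_Icc.2 ⟨le_trans ht1 (Nat.le_succ t), hlt⟩)).1
    -- PL-type inequality
    set c : ℝ := (t : ℝ) * μ with hcdef
    have hcpos : 0 < c := by positivity
    have key := ftl_aux_strongGradLe (hFdiff (t + 1) (by simpa using htT)) hFsc (w t) (w (t + 1))
    rw [hGeq] at key
    set r := ‖w (t + 1) - w t‖ with hrdef
    have hr0 : 0 ≤ r := norm_nonneg _
    have hip : -(‖G‖ * r) ≤ @inner ℝ E _ G (w (t + 1) - w t) := by
      have habs := abs_real_inner_le_norm G (w (t + 1) - w t)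
      linarith [(abs_le.1 habs).1]
    have hq : ‖G‖ * r - c / 2 * r ^ 2 ≤ ‖G‖ ^ 2 / (2 * c) := by
      rw [← sub_nonneg]
      have hexp : ‖G‖ ^ 2 / (2 * c) - (‖G‖ * r - c / 2 * r ^ 2)
          = (c * r - ‖G‖) ^ 2 / (2 * c) := by
        field_simp
        ring
      rw [hexp]
      positivity
    have h5 : F (t + 1) (w t) - F (t + 1) (w (t + 1)) ≤ ‖G‖ ^ 2 / (2 * c) := by
      linarith [key, hip, hq]
    refine h5.trans ?_
    have ht0 : (t : ℝ) ≠ 0 := ne_of_gt htpos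
    have hμ0 : μ ≠ 0 := ne_of_gt hμ
    have hKc : K * (1 / (t : ℝ)) = L ^ 2 * D ^ 2 / (2 * c) := by
      rw [hKdef, hcdef, div_mul_div_comm, mul_one]
      congr 1
      ring
    rw [hKc]
    gcongr
  -- telescoping identity
  have htele : ∑ t ∈ Finset.Icc 1 T, (F (t + 1) (w t) - F (t + 1) (w (t + 1)))
      = (∑ t ∈ Finset.Icc 1 T, l t (w t)) + (F 1 (w 1) - F (T + 1) (w (T + 1))) := by
    have hterm : ∀ t ∈ Finset.Icc 1 T,
        F (t + 1) (w t) - F (t + 1) (w (t + 1))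
          = l t (w t) + (F t (w t) - F (t + 1) (w (t + 1))) := by
      intro t ht
      rw [Finset.mem_Icc] at ht
      have := hFsucc t ht.1 (w t)
      linarith [this]
    rw [Finset.sum_congr rfl hterm, Finset.sum_add_distrib]
    congr 1
    have hre : ∑ t ∈ Finset.Icc 1 T, (F t (w t) - F (t + 1) (w (t + 1)))
        = ∑ i ∈ Finset.range T,
            ((fun j => F (j + 1) (w (j + 1))) i - (fun j => F (j + 1) (w (j + 1))) (i + 1)) := by
      rw [← Finset.Ico_add_one_right_eq_Icc, Finset.sum_Ico_eq_sum_range]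
      simp only [Nat.add_sub_cancel]
      refine Finset.sum_congr rfl fun i _ => ?_
      simp [add_comm 1 i]
    rw [hre, Finset.sum_range_sub' (fun j => F (j + 1) (w (j + 1))) T]
  have hF1 : F 1 (w 1) = 0 := by
    rw [hF]; simp
  have hFT : F (T + 1) wstar = ∑ t ∈ Finset.Icc 1 T, l t wstar := by
    rw [hF]; simp
  -- harmonic sum bound
  have hharm : ∑ t ∈ Finset.Icc 1 T, (1 / (t : ℝ)) ≤ 1 + Real.log T := by
    have h1 : (harmonic T : ℝ) = ∑ t ∈ Finset.Icc 1 T, (1 / (t : ℝ)) := by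
      rw [harmonic_eq_sum_Icc]
      push_cast
      simp [one_div]
    rw [← h1]
    exact harmonic_le_one_add_log T
  -- final chain
  have hchain1 : ∑ t ∈ Finset.Icc 1 T, (l t (w t) - l t wstar)
      ≤ ∑ t ∈ Finset.Icc 1 T, (F (t + 1) (w t) - F (t + 1) (w (t + 1))) := by
    rw [htele, hF1, Finset.sum_sub_distrib]
    have := hminT wstar
    rw [hFT] at this
    linarith
  refine hchain1.trans ?_
  calc ∑ t ∈ Finset.Icc 1 T, (F (t + 1) (w t) - F (t + 1) (w (t + 1)))
      ≤ ∑ t ∈ Finset.Icc 1 T, K * (1 / (t : ℝ)) := Finset.sum_le_sum hstep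
    _ = K * ∑ t ∈ Finset.Icc 1 T, (1 / (t : ℝ)) := by rw [Finset.mul_sum]
    _ ≤ K * (1 + Real.log T) := by
        exact mul_le_mul_of_nonneg_left hharm hK0
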